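/- arXiv:2101.12029 — 4 statements merged into one kernel-verified Lean document; each statement's English description precedes it below -/
import Mathlib

section
/- Let a₁,…,aₙ, b be positive rationals, q₁,…,qₙ, q positive rationals with qᵢ ≥ q for all i, and suppose ∑ᵢ qᵢ·log₂(aᵢ) ≥ q·log₂(b). Then for every real c ≥ 1, ∑ᵢ qᵢ·log₂(aᵢ + c) ≥ q·log₂(b + c). -/
open Real Finset

lemma key_tangent (b c x : ℝ) (hb : 0 < b) (hc : 1 ≤ c) (hx : 0 < x) :
    Real.logb 2 (b + c) + (b / (b + c)) * (Real.logb 2 x - Real.logb 2 b)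
      ≤ Real.logb 2 (x + c) := by
  set m : ℝ := b / (b + c) with hm
  have hbc : 0 < b + c := by linarith
  have hm0 : 0 ≤ m := by positivity
  have hm1 : m ≤ 1 := by
    rw [hm, div_le_one hbc]; linarith
  -- Bernoulli: (x/b)^m ≤ 1 + m*(x/b - 1)
  have hbern : (x / b) ^ m ≤ 1 + m * (x / b - 1) := by
    have hs : (-1 : ℝ) ≤ x / b - 1 := by
      have : 0 < x / b := by positivity
      linarith
    have := rpow_one_add_le_one_add_mul_self hs hm0 hm1
    simpa using this
  have hrhs : 1 + m * (x / b - 1) = (x + c) / (b + c) := by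
    rw [hm]; field_simp; ring
  have hineq : (x / b) ^ m ≤ (x + c) / (b + c) := by
    rw [← hrhs]; exact hbern
  have hxb : 0 < x / b := by positivity
  have hlog := Real.logb_le_logb_of_le (by norm_num : (1:ℝ) < 2)
    (by positivity : 0 < (x / b) ^ m) hineq
  rw [Real.logb, Real.log_rpow hxb] at hlog
  have h1 : m * Real.log (x / b) / Real.log 2 = m * (Real.logb 2 x - Real.logb 2 b) := by
    rw [Real.log_div (ne_of_gt hx) (ne_of_gt hb)]
    simp [Real.logb]; ring
  have h2 : Real.logb 2 ((x + c) / (b + c)) = Real.logb 2 (x + c) - Real.logb 2 (b + c) := by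
    rw [Real.logb_div (by positivity) (ne_of_gt hbc)]
  rw [h1, h2] at hlog
  linarith

theorem log_inequality_shift (n : ℕ) (hn : 1 ≤ n)
    (a : Fin n → ℚ) (b : ℚ) (q : Fin n → ℚ) (qq : ℚ)
    (ha : ∀ i, 0 < a i) (hb : 0 < b) (hq : ∀ i, 0 < q i) (hqq : 0 < qq)
    (hge : ∀ i, q i ≥ qq)
    (h : ∑ i, (q i : ℝ) * Real.logb 2 (a i : ℝ) ≥ (qq : ℝ) * Real.logb 2 (b : ℝ)) :
    ∀ c : ℝ, 1 ≤ c →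
      ∑ i, (q i : ℝ) * Real.logb 2 ((a i : ℝ) + c) ≥ (qq : ℝ) * Real.logb 2 ((b : ℝ) + c) := by
  intro c hc
  have hbR : (0:ℝ) < (b:ℝ) := by exact_mod_cast hb
  set m : ℝ := (b:ℝ) / ((b:ℝ) + c) with hm
  set L : ℝ := Real.logb 2 ((b:ℝ) + c) with hL
  have hbc : (0:ℝ) < (b:ℝ) + c := by linarith
  have hm0 : 0 ≤ m := by positivity
  have hm1 : m ≤ 1 := by rw [hm, div_le_one hbc]; linarith
  -- sum of q ≥ qq
  have hQ : (qq:ℝ) ≤ ∑ i, (q i : ℝ) := by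
    obtain ⟨i₀⟩ : Nonempty (Fin n) := ⟨⟨0, hn⟩⟩
    calc (qq:ℝ) ≤ (q i₀ : ℝ) := by exact_mod_cast hge i₀
      _ ≤ ∑ i, (q i : ℝ) := Finset.single_le_sum (f := fun i => (q i : ℝ))
          (fun i _ => le_of_lt (show (0:ℝ) < (q i : ℝ) by exact_mod_cast hq i)) (Finset.mem_univ i₀)
  -- tangent bound per term
  have hterm : ∀ i, (q i : ℝ) * (L + m * (Real.logb 2 (a i : ℝ) - Real.logb 2 (b:ℝ)))
      ≤ (q i : ℝ) * Real.logb 2 ((a i : ℝ) + c) := by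
    intro i
    have hai : (0:ℝ) < (a i : ℝ) := by exact_mod_cast ha i
    have := key_tangent (b:ℝ) c (a i : ℝ) hbR hc hai
    have hqi : (0:ℝ) ≤ (q i : ℝ) := by exact_mod_cast (hq i).le
    exact mul_le_mul_of_nonneg_left this hqi
  have hsum : ∑ i, (q i : ℝ) * (L + m * (Real.logb 2 (a i : ℝ) - Real.logb 2 (b:ℝ)))
      ≤ ∑ i, (q i : ℝ) * Real.logb 2 ((a i : ℝ) + c) :=
    Finset.sum_le_sum (fun i _ => hterm i)
  -- expand left sum
  have hexpand : ∑ i, (q i : ℝ) * (L + m * (Real.logb 2 (a i : ℝ) - Real.logb 2 (b:ℝ)))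
      = (∑ i, (q i : ℝ)) * (L - m * Real.logb 2 (b:ℝ))
        + m * ∑ i, (q i : ℝ) * Real.logb 2 (a i : ℝ) := by
    rw [Finset.sum_mul, Finset.mul_sum]
    rw [← Finset.sum_add_distrib]
    apply Finset.sum_congr rfl
    intro i _
    ring
  -- L - m * logb b ≥ 0
  have hLnn : 0 ≤ L - m * Real.logb 2 (b:ℝ) := by
    rcases le_or_gt 1 (b:ℝ) with hb1 | hb1
    · have h1 : Real.logb 2 (b:ℝ) ≤ L := by
        apply Real.logb_le_logb_of_le (by norm_num : (1:ℝ) < 2) hbR; linarith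
      have h2 : 0 ≤ Real.logb 2 (b:ℝ) := Real.logb_nonneg (by norm_num) hb1
      nlinarith
    · have h1 : Real.logb 2 (b:ℝ) < 0 :=
        Real.logb_neg (by norm_num) hbR hb1
      have h2 : 0 ≤ L := Real.logb_nonneg (by norm_num) (by linarith)
      nlinarith
  have hmain : (qq:ℝ) * L ≤ ∑ i, (q i : ℝ) * Real.logb 2 ((a i : ℝ) + c) := by
    have hstep : (qq:ℝ) * (L - m * Real.logb 2 (b:ℝ)) + m * ((qq:ℝ) * Real.logb 2 (b:ℝ))
        ≤ (∑ i, (q i : ℝ)) * (L - m * Real.logb 2 (b:ℝ))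
          + m * ∑ i, (q i : ℝ) * Real.logb 2 (a i : ℝ) := by
      have h1 := mul_le_mul_of_nonneg_right hQ hLnn
      have h2 := mul_le_mul_of_nonneg_left h hm0
      linarith
    calc (qq:ℝ) * L
        = (qq:ℝ) * (L - m * Real.logb 2 (b:ℝ)) + m * ((qq:ℝ) * Real.logb 2 (b:ℝ)) := by ring
      _ ≤ (∑ i, (q i : ℝ)) * (L - m * Real.logb 2 (b:ℝ))
          + m * ∑ i, (q i : ℝ) * Real.logb 2 (a i : ℝ) := hstep
      _ = ∑ i, (q i : ℝ) * (L + m * (Real.logb 2 (a i : ℝ) - Real.logb 2 (b:ℝ))) := hexpand.symm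
      _ ≤ _ := hsum
  exact hmain
end

section
/- Let a₁,…,aₙ be positive reals and q₁,…,qₙ reals with qᵢ ≥ 1 for all i, n ≥ 1, and let c ≥ 1 be real. Then ∏ᵢ (aᵢ + c)^{qᵢ} ≥ ∏ᵢ aᵢ^{qᵢ} + c. -/
lemma key_rpow_add (a q c : ℝ) (ha : 0 < a) (hq : 1 ≤ q) (hc : 1 ≤ c) :
    a ^ q + c ≤ (a + c) ^ q := by
  have h1 : c ≤ c ^ q := by
    have := Real.rpow_le_rpow_of_exponent_le hc hq
    simpa [Real.rpow_one] using this
  calc a ^ q + c ≤ a ^ q + c ^ q := by linarith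
    _ ≤ (a + c) ^ q := by
        have h := NNReal.add_rpow_le_rpow_add a.toNNReal c.toNNReal hq
        have := (NNReal.coe_le_coe).2 h
        push_cast [NNReal.coe_rpow] at this
        rwa [Real.coe_toNNReal _ ha.le, Real.coe_toNNReal _ (by linarith : (0:ℝ) ≤ c)] at this

theorem prod_rpow_add_ge (n : ℕ) (hn : 1 ≤ n)
    (a : Fin n → ℝ) (q : Fin n → ℝ) (c : ℝ)
    (ha : ∀ i, 0 < a i) (hq : ∀ i, 1 ≤ q i) (hc : 1 ≤ c) :
    ∏ i, (a i + c) ^ (q i) ≥ (∏ i, (a i) ^ (q i)) + c := by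
  induction n with
  | zero => omega
  | succ m ih =>
    rw [Fin.prod_univ_succ, Fin.prod_univ_succ]
    rcases Nat.eq_zero_or_pos m with hm | hm
    · subst hm
      simpa using key_rpow_add _ _ _ (ha 0) (hq 0) hc
    · have IH := ih hm (fun i => a i.succ) (fun i => q i.succ)
        (fun i => ha _) (fun i => hq _)
      set R := ∏ i : Fin m, (a i.succ) ^ (q i.succ) with hR
      have hRpos : 0 < R := Finset.prod_pos fun i _ => Real.rpow_pos_of_pos (ha _) _
      have h0 : 0 < a 0 ^ q 0 := Real.rpow_pos_of_pos (ha 0) _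
      have h1 : (a 0 ^ q 0 + c) * (R + c)
          ≤ (a 0 + c) ^ (q 0) * ∏ i : Fin m, (a i.succ + c) ^ (q i.succ) := by
        apply mul_le_mul (key_rpow_add _ _ _ (ha 0) (hq 0) hc) IH
          (by linarith) (Real.rpow_nonneg (by linarith [ha 0]) _)
      have h2 : a 0 ^ q 0 * R + c ≤ (a 0 ^ q 0 + c) * (R + c) := by nlinarith
      linarith
end

section
/- (Affine Farkas lemma, hard direction) Let A be an m×n real matrix, b ∈ ℝᵐ, u ∈ ℝⁿ, λ ∈ ℝ. Assume the system A·x ≤ b, x ≥ 0 is solvable. If for all x ≥ 0 with A·x ≤ b we have uᵀ·x ≤ λ, then there exists f ≥ 0 with uᵀ ≤ fᵀA componentwise and fᵀb ≤ λ. -/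
open Matrix Finset
open scoped InnerProductSpace

section Cone

variable {H : Type*} [NormedAddCommGroup H] [InnerProductSpace ℝ H]
variable {ι : Type*} [Fintype ι]

/-- The finitely generated cone on a family of vectors. -/
def coneOf (g : ι → H) : Set H :=
  {x | ∃ c : ι → ℝ, (∀ i, 0 ≤ c i) ∧ x = ∑ i, c i • g i}

lemma caratheodory_aux (g : ι → H) :
    ∀ (N : ℕ) (t : Finset ι) (c : ι → ℝ), t.card ≤ N → (∀ i, 0 ≤ c i) →
      (∀ i ∉ t, c i = 0) →
      ∃ (t' : Finset ι) (c' : ι → ℝ), LinearIndependent ℝ (fun i : t' => g i) ∧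
        (∀ i, 0 ≤ c' i) ∧ (∀ i ∉ t', c' i = 0) ∧
        ∑ i, c' i • g i = ∑ i, c i • g i := by
  classical
  intro N
  induction N with
  | zero =>
    intro t c hcard hc0 hcz
    have ht : t = ∅ := Finset.card_eq_zero.mp (Nat.le_zero.mp hcard)
    exact ⟨∅, c, linearIndependent_empty_type, hc0,
      fun i _ => hcz i (by simp [ht]), rfl⟩
  | succ N ih =>
    intro t c hcard hc0 hcz
    by_cases hindep : LinearIndependent ℝ (fun i : t => g i)
    · exact ⟨t, c, hindep, hc0, hcz, rfl⟩
    · obtain ⟨d, hdsum, i₀, hd0⟩ := Fintype.not_linearIndependent_iff.mp hindep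
      -- extend d to ι, possibly negated so that some coefficient is positive
      have hsum : ∀ d : {i // i ∈ t} → ℝ,
          ∑ i, (fun i : ι => if h : i ∈ t then d ⟨i, h⟩ else 0) i • g i
            = ∑ i : t, d i • g i := by
        intro d
        rw [show ∑ i : ι, (fun i : ι => if h : i ∈ t then d ⟨i, h⟩ else 0) i • g i
              = ∑ i ∈ t, (if h : i ∈ t then d ⟨i, h⟩ else 0) • g i from
            (Finset.sum_subset (Finset.subset_univ t)
              (by intro i _ hit; simp [hit])).symm,
          ← Finset.sum_attach t (fun i => (if h : i ∈ t then d ⟨i, h⟩ else 0) • g i)]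
        exact Finset.sum_congr rfl (fun i _ => by simp)
      have key : ∃ e : ι → ℝ, (∀ i ∉ t, e i = 0) ∧ (∑ i, e i • g i = 0) ∧
          ∃ i ∈ t, 0 < e i := by
        rcases lt_or_gt_of_ne hd0 with hneg | hpos
        · refine ⟨fun i => if h : i ∈ t then (-d) ⟨i, h⟩ else 0, ?_, ?_, ?_⟩
          · intro i hit; simp [hit]
          · rw [hsum]
            rw [show ∑ i : {x // x ∈ t}, (-d) i • g ↑i = -∑ i : {x // x ∈ t}, d i • g ↑i by
              simp [neg_smul, Finset.sum_neg_distrib], hdsum, neg_zero]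
          · exact ⟨i₀, i₀.2, by simp only [dif_pos i₀.2, Subtype.coe_eta, Pi.neg_apply]; linarith⟩
        · refine ⟨fun i => if h : i ∈ t then d ⟨i, h⟩ else 0, ?_, ?_, ?_⟩
          · intro i hit; simp [hit]
          · rw [hsum]; exact hdsum
          · exact ⟨i₀, i₀.2, by simpa only [dif_pos i₀.2, Subtype.coe_eta] using hpos⟩
      obtain ⟨e, hez, hesum, i₁, hi₁t, hi₁pos⟩ := key
      set s := t.filter (fun i => 0 < e i) with hs
      have hsne : s.Nonempty := ⟨i₁, Finset.mem_filter.mpr ⟨hi₁t, hi₁pos⟩⟩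
      obtain ⟨i₂, hi₂s, hmin⟩ := Finset.exists_min_image s (fun i => c i / e i) hsne
      have hi₂t : i₂ ∈ t := (Finset.mem_filter.mp hi₂s).1
      have he₂pos : 0 < e i₂ := (Finset.mem_filter.mp hi₂s).2
      set τ := c i₂ / e i₂ with hτ
      have hτ0 : 0 ≤ τ := div_nonneg (hc0 i₂) he₂pos.le
      set c' := fun i => c i - τ * e i with hc'
      have hc'0 : ∀ i, 0 ≤ c' i := by
        intro i
        by_cases hit : i ∈ t
        · by_cases hei : 0 < e i
          · have h1 : τ ≤ c i / e i := hmin i (Finset.mem_filter.mpr ⟨hit, hei⟩)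
            have h2 : τ * e i ≤ c i := (le_div_iff₀ hei).mp h1
            simpa [hc'] using sub_nonneg.mpr h2
          · have : τ * e i ≤ 0 := mul_nonpos_of_nonneg_of_nonpos hτ0 (not_lt.mp hei)
            simp only [hc']
            nlinarith [hc0 i]
        · simp [hc', hez i hit, hc0 i]
      have hc'z : ∀ i ∉ t.erase i₂, c' i = 0 := by
        intro i hi
        rw [Finset.mem_erase] at hi
        push_neg at hi
        by_cases hit : i ∈ t
        · have hii : i = i₂ := by
            by_contra hne
            exact (hi hne) hit
          subst hii
          simp only [hc', hτ]
          field_simp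
          ring
        · simp [hc', hez i hit, hcz i hit]
      have hc'sum : ∑ i, c' i • g i = ∑ i, c i • g i := by
        simp only [hc', sub_smul, Finset.sum_sub_distrib, mul_smul,
          ← Finset.smul_sum, hesum, smul_zero, sub_zero]
      have hcard' : (t.erase i₂).card ≤ N := by
        have := Finset.card_erase_lt_of_mem hi₂t
        omega
      obtain ⟨t', c'', h1, h2, h3, h4⟩ := ih (t.erase i₂) c' hcard' hc'0 hc'z
      exact ⟨t', c'', h1, h2, h3, h4.trans hc'sum⟩

end Cone

section More

variable {H : Type*} [NormedAddCommGroup H] [InnerProductSpace ℝ H]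
variable {ι : Type*} [Fintype ι]

lemma isClosed_coneOf_of_linearIndependent [FiniteDimensional ℝ H] (g : ι → H)
    (hg : LinearIndependent ℝ g) : IsClosed (coneOf g) := by
  classical
  let φ : (ι → ℝ) →ₗ[ℝ] H :=
    { toFun := fun c => ∑ i, c i • g i
      map_add' := by
        intro c₁ c₂
        simp [add_smul, Finset.sum_add_distrib]
      map_smul' := by
        intro r c
        simp [mul_smul, Finset.smul_sum] }
  have hinj : Function.Injective φ := by
    rw [← LinearMap.ker_eq_bot, LinearMap.ker_eq_bot']
    intro c hc
    have := Fintype.linearIndependent_iff.mp hg c hc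
    funext i
    exact this i
  have hemb := LinearMap.isClosedEmbedding_of_injective (LinearMap.ker_eq_bot.mpr hinj)
  have hset : IsClosed {c : ι → ℝ | ∀ i, 0 ≤ c i} := by
    have : {c : ι → ℝ | ∀ i, 0 ≤ c i} = ⋂ i, {c : ι → ℝ | 0 ≤ c i} := by
      ext c; simp
    rw [this]
    exact isClosed_iInter fun i => isClosed_le continuous_const (continuous_apply i)
  have : coneOf g = φ '' {c : ι → ℝ | ∀ i, 0 ≤ c i} := by
    ext x
    constructor
    · rintro ⟨c, hc0, rfl⟩; exact ⟨c, hc0, rfl⟩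
    · rintro ⟨c, hc0, rfl⟩; exact ⟨c, hc0, rfl⟩
  rw [this]
  exact hemb.isClosedMap _ hset

lemma isClosed_coneOf [FiniteDimensional ℝ H] (g : ι → H) : IsClosed (coneOf g) := by
  classical
  have hdecomp : coneOf g = ⋃ t : {t : Finset ι // LinearIndependent ℝ (fun i : t => g i)},
      coneOf (fun i : (t : Finset ι) => g i) := by
    ext x
    constructor
    · rintro ⟨c, hc0, rfl⟩
      obtain ⟨t', c', hind, hc'0, hc'z, hsum⟩ :=
        caratheodory_aux g (Finset.univ.card) Finset.univ c (le_refl _) hc0 (by simp) 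
      refine Set.mem_iUnion.mpr ⟨⟨t', hind⟩, fun i => c' i, fun i => hc'0 i, ?_⟩
      rw [← hsum]
      rw [show ∑ i : ι, c' i • g i = ∑ i ∈ t', c' i • g i from
          (Finset.sum_subset (Finset.subset_univ t')
            (by intro i _ hit; simp [hc'z i hit])).symm,
        ← Finset.sum_attach t' (fun i => c' i • g i)]
      rfl
    · intro hx
      obtain ⟨⟨t, ht⟩, c, hc0, rfl⟩ := Set.mem_iUnion.mp hx
      refine ⟨fun i => if h : i ∈ t then c ⟨i, h⟩ else 0, fun i => ?_, ?_⟩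
      · by_cases h : i ∈ t <;> simp [h, hc0]
      · rw [show ∑ i : ι, (if h : i ∈ t then c ⟨i, h⟩ else 0) • g i
              = ∑ i ∈ t, (if h : i ∈ t then c ⟨i, h⟩ else 0) • g i from
            (Finset.sum_subset (Finset.subset_univ t)
              (by intro i _ hit; simp [hit])).symm,
          ← Finset.sum_attach t (fun i => (if h : i ∈ t then c ⟨i, h⟩ else 0) • g i)]
        exact Finset.sum_congr rfl (fun i _ => by simp)
  rw [hdecomp]
  exact isClosed_iUnion_of_finite fun t => isClosed_coneOf_of_linearIndependent _ t.2

/-- cone membership or separation -/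
lemma coneOf_separation [FiniteDimensional ℝ H] (g : ι → H) (v : H) (hv : v ∉ coneOf g) :
    ∃ y : H, (∀ i, 0 ≤ ⟪g i, y⟫_ℝ) ∧ ⟪y, v⟫_ℝ < 0 := by
  classical
  let K : ConvexCone ℝ H :=
    { carrier := coneOf g
      smul_mem' := by
        rintro r hr x ⟨c, hc0, rfl⟩
        exact ⟨fun i => r * c i, fun i => mul_nonneg hr.le (hc0 i), by
          simp [Finset.smul_sum, mul_smul]⟩
      add_mem' := by
        rintro x ⟨c, hc0, rfl⟩ y ⟨c', hc'0, rfl⟩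
        exact ⟨fun i => c i + c' i, fun i => add_nonneg (hc0 i) (hc'0 i), by
          simp [add_smul, Finset.sum_add_distrib]⟩ }
  have hne : (K : Set H).Nonempty := ⟨0, ⟨fun _ => 0, fun _ => le_refl _, by simp⟩⟩
  have hKclosed : IsClosed (K : Set H) := isClosed_coneOf g
  haveI : CompleteSpace H := FiniteDimensional.complete ℝ H
  obtain ⟨y, hy1, hy2⟩ :=
    ConvexCone.hyperplane_separation_of_nonempty_of_isClosed_of_notMem
      (⟨K.toPointedCone (show (0 : H) ∈ K from ⟨fun _ => 0, fun _ => le_refl _, by simp⟩),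
        hKclosed⟩ : ProperCone ℝ H) hv
  refine ⟨y, fun i => ?_, by rwa [real_inner_comm]⟩
  apply hy1
  exact ⟨fun j => if j = i then 1 else 0, fun j => by positivity, by simp⟩

end More

section Main

lemma eval_sum {ι κ : Type*} [Fintype ι] [Fintype κ] (c : ι → ℝ)
    (g : ι → EuclideanSpace ℝ κ) (o : κ) :
    (∑ i, c i • g i) o = ∑ i, c i * g i o := by
  have h0 : (∑ i, c i • g i) o = EuclideanSpace.proj (𝕜 := ℝ) o (∑ i, c i • g i) := rfl
  rw [h0, map_sum]
  simp [smul_eq_mul]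

lemma euclid_inner {κ : Type*} [Fintype κ] (x y : EuclideanSpace ℝ κ) :
    ⟪x, y⟫_ℝ = ∑ o, x o * y o := by
  simp [PiLp.inner_apply, RCLike.inner_apply, mul_comm]

theorem farkas_hard (m n : ℕ) (A : Matrix (Fin m) (Fin n) ℝ) (b : Fin m → ℝ)
    (u : Fin n → ℝ) (lam : ℝ)
    (hsolv : ∃ x : Fin n → ℝ, (∀ j, 0 ≤ x j) ∧ (∀ i, A.mulVec x i ≤ b i))
    (h : ∀ x : Fin n → ℝ, (∀ j, 0 ≤ x j) → (∀ i, A.mulVec x i ≤ b i) → u ⬝ᵥ x ≤ lam) :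
    ∃ f : Fin m → ℝ, (∀ i, 0 ≤ f i) ∧ (∀ j, u j ≤ Matrix.vecMul f A j) ∧
      f ⬝ᵥ b ≤ lam := by
  classical
  obtain ⟨x₀, hx₀0, hx₀f⟩ := hsolv
  set g : (Sum (Fin m) (Sum (Fin n) Unit)) → EuclideanSpace ℝ (Option (Fin n)) :=
    fun i => Sum.elim
      (fun i => (WithLp.toLp 2 (fun (o : Option (Fin n)) => o.elim (b i) (fun j => A i j)) : EuclideanSpace ℝ (Option (Fin n))))
      (Sum.elim
        (fun j => (WithLp.toLp 2 (fun (o : Option (Fin n)) => o.elim 0 (fun j' => if j' = j then (-1 : ℝ) else 0)) : EuclideanSpace ℝ (Option (Fin n))))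
        (fun _ => (WithLp.toLp 2 (fun (o : Option (Fin n)) => o.elim 1 (fun _ => 0)) : EuclideanSpace ℝ (Option (Fin n))))) i with hg
  set v : EuclideanSpace ℝ (Option (Fin n)) :=
    (WithLp.toLp 2 (fun (o : Option (Fin n)) => o.elim lam (fun j => u j)) : EuclideanSpace ℝ (Option (Fin n))) with hv
  by_cases hmem : v ∈ coneOf g
  · obtain ⟨c, hc0, hsum⟩ := hmem
    refine ⟨fun i => c (.inl i), fun i => hc0 _, ?_, ?_⟩
    · intro j
      have hj : v (some j) = ∑ i, c i * g i (some j) := by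
        rw [hsum, eval_sum]
      simp only [Fintype.sum_sum_type] at hj
      have huj : u j = v (some j) := rfl
      rw [huj, hj]
      have h2 : ∑ j' : Fin n, c (.inr (.inl j')) * g (.inr (.inl j')) (some j)
          = -c (.inr (.inl j)) := by
        simp only [hg]
        simp [Finset.sum_ite_eq, mul_ite]
      have h3 : ∑ z : Unit, c (.inr (.inr z)) * g (.inr (.inr z)) (some j) = 0 := by
        simp [hg]
      have h1 : ∑ i : Fin m, c (.inl i) * g (.inl i) (some j) = Matrix.vecMul (fun i => c (.inl i)) A j := by
        simp [hg, Matrix.vecMul, dotProduct]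
      rw [h1, h2, h3]
      have := hc0 (.inr (.inl j))
      linarith
    · have hl : v none = ∑ i, c i * g i none := by
        rw [hsum, eval_sum]
      simp only [Fintype.sum_sum_type] at hl
      have hlam : lam = v none := rfl
      have h1 : ∑ i : Fin m, c (.inl i) * g (.inl i) none
          = (fun i => c (.inl i)) ⬝ᵥ b := by
        simp [hg, dotProduct]
      have h2 : ∑ j' : Fin n, c (.inr (.inl j')) * g (.inr (.inl j')) none = 0 := by
        simp [hg]
      have h3 : ∑ z : Unit, c (.inr (.inr z)) * g (.inr (.inr z)) none
          = c (.inr (.inr ())) := by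
        simp [hg]
      have := hc0 (.inr (.inr ()))
      rw [hlam, hl, h1, h2, h3]
      linarith
  · exfalso
    obtain ⟨y, hy1, hy2⟩ := coneOf_separation g v hmem
    set x : Fin n → ℝ := fun j => -(y (some j)) with hx
    have hx0 : ∀ j, 0 ≤ x j := by
      intro j
      have := hy1 (.inr (.inl j))
      rw [euclid_inner] at this
      simp only [Fintype.sum_option] at this
      simp only [hg, hx] at this ⊢
      simpa using this
    have hμ : 0 ≤ y none := by
      have := hy1 (.inr (.inr ()))
      rw [euclid_inner] at this
      simp only [Fintype.sum_option] at this
      simpa [hg] using this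
    have hAx : ∀ i, A.mulVec x i ≤ b i * y none := by
      intro i
      have := hy1 (.inl i)
      rw [euclid_inner] at this
      simp only [Fintype.sum_option] at this
      have hrw : ∑ j, g (.inl i) (some j) * y (some j) = -(A.mulVec x i) := by
        simp [hg, hx, Matrix.mulVec, dotProduct, mul_comm]
      rw [hrw] at this
      have hb : g (.inl i) none = b i := rfl
      rw [hb] at this
      linarith
    have huv : y none * lam < u ⬝ᵥ x := by
      rw [euclid_inner] at hy2
      simp only [Fintype.sum_option] at hy2
      have hrw : ∑ j, y (some j) * v (some j) = -(u ⬝ᵥ x) := by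
        simp only [hv, hx, dotProduct, Option.elim, ← Finset.sum_neg_distrib]
        exact Finset.sum_congr rfl (fun j _ => by ring)
      rw [hrw] at hy2
      have hb : v none = lam := rfl
      rw [hb] at hy2
      linarith
    rcases lt_or_eq_of_le hμ with hpos | hzero
    · -- y none > 0
      have hfeas := h ((y none)⁻¹ • x)
        (fun j => by
          simp only [Pi.smul_apply, smul_eq_mul]
          exact mul_nonneg (inv_nonneg.mpr hμ) (hx0 j))
        (fun i => by
          have h2 : (A.mulVec ((y none)⁻¹ • x)) i = (y none)⁻¹ * A.mulVec x i := by
            rw [Matrix.mulVec_smul]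
            simp
          rw [h2]
          calc (y none)⁻¹ * A.mulVec x i ≤ (y none)⁻¹ * (b i * y none) :=
                mul_le_mul_of_nonneg_left (hAx i) (inv_nonneg.mpr hμ)
            _ = b i := by field_simp)
      have hdp : u ⬝ᵥ ((y none)⁻¹ • x) = (y none)⁻¹ * (u ⬝ᵥ x) := by
        simp only [dotProduct, Pi.smul_apply, smul_eq_mul, Finset.mul_sum]
        exact Finset.sum_congr rfl (fun j _ => by ring)
      rw [hdp] at hfeas
      have hfin : u ⬝ᵥ x ≤ y none * lam := by
        have := mul_le_mul_of_nonneg_left hfeas hμ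
        calc u ⬝ᵥ x = y none * ((y none)⁻¹ * (u ⬝ᵥ x)) := by field_simp
          _ ≤ y none * lam := this
      linarith
    · -- y none = 0
      have hAx0 : ∀ i, A.mulVec x i ≤ 0 := by
        intro i; have := hAx i; rw [← hzero] at this; simpa using this
      have hux : 0 < u ⬝ᵥ x := by
        have := huv; rw [← hzero] at this; simpa using this
      set T := (lam - u ⬝ᵥ x₀ + 1) / (u ⬝ᵥ x) with hT
      have hT0 : 0 ≤ T := by
        have h0 := h x₀ hx₀0 hx₀f
        apply div_nonneg _ hux.le
        linarith
      have hfeas := h (x₀ + T • x)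
        (fun j => by
          have := hx0 j; have := hx₀0 j
          simp only [Pi.add_apply, Pi.smul_apply, smul_eq_mul]
          nlinarith)
        (fun i => by
          rw [Matrix.mulVec_add, Matrix.mulVec_smul]
          have h1 := hAx0 i
          have h2 := hx₀f i
          simp only [Pi.add_apply, Pi.smul_apply, smul_eq_mul]
          nlinarith)
      have hdp : u ⬝ᵥ (x₀ + T • x) = u ⬝ᵥ x₀ + T * (u ⬝ᵥ x) := by
        simp only [dotProduct, Pi.add_apply, Pi.smul_apply, smul_eq_mul,
          Finset.mul_sum, ← Finset.sum_add_distrib]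
        exact Finset.sum_congr rfl (fun j _ => by ring)
      rw [hdp, hT, div_mul_cancel₀ _ hux.ne'] at hfeas
      linarith

end Main
end

section
/- (Sharing lemma for potentials) Let u be a binary tree, and let Q assign coefficients q₁, q₂ ≥ 0 and a finitely supported family (q_{(a₁,a₂,b)})_{a₁,a₂,b∈ℕ} of nonnegative rationals. Define Φ(u₁,u₂ | Q) = q₁·rk(u₁) + q₂·rk(u₂) + ∑ q_{(a₁,a₂,b)}·log₂(a₁|u₁| + a₂|u₂| + b). Then there exists an annotation ▽Q of length 1 such that Φ(u,u | Q) = Φ(u | ▽Q); concretely, ▽Q has rank coefficient q₁+q₂ and coefficient of log₂(a|u|+b) equal to ∑_{a₁+a₂=a} q_{(a₁,a₂,b)}. -/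
inductive BTree where
  | leaf : BTree
  | node : BTree → ℕ → BTree → BTree

def BTree.size : BTree → ℕ
  | .leaf => 1
  | .node l _ r => l.size + r.size

noncomputable def log2p (n : ℕ) : ℝ := Real.logb 2 (max n 1 : ℕ)

noncomputable def BTree.rk : BTree → ℝ
  | .leaf => 1
  | .node l _ r => l.rk + log2p l.size + log2p r.size + r.rk

theorem sharing_lemma (u : BTree) (q₁ q₂ : ℚ) (hq₁ : 0 ≤ q₁) (hq₂ : 0 ≤ q₂)
    (q : ℕ × ℕ × ℕ → ℚ) (hq : ∀ p, 0 ≤ q p) (hfin : (Function.support q).Finite) :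
    ∃ (r : ℚ) (q' : ℕ × ℕ → ℚ),
      r = q₁ + q₂ ∧
      (∀ ab : ℕ × ℕ,
        q' ab = ∑ᶠ p ∈ {p : ℕ × ℕ × ℕ | p.1 + p.2.1 = ab.1 ∧ p.2.2 = ab.2}, q p) ∧
      (q₁ : ℝ) * u.rk + (q₂ : ℝ) * u.rk +
          ∑ᶠ p : ℕ × ℕ × ℕ,
            (q p : ℝ) * Real.logb 2 ((p.1 * u.size + p.2.1 * u.size + p.2.2 : ℕ) : ℝ)
        = (r : ℝ) * u.rk +
          ∑ᶠ ab : ℕ × ℕ, (q' ab : ℝ) * Real.logb 2 ((ab.1 * u.size + ab.2 : ℕ) : ℝ) := by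
  classical
  set n := u.size with hn
  set φ : ℕ × ℕ × ℕ → ℕ × ℕ := fun p => (p.1 + p.2.1, p.2.2) with hφ
  set S : Finset (ℕ × ℕ × ℕ) := hfin.toFinset with hSdef
  have hSsupp : ∀ p, p ∉ S → q p = 0 := by
    intro p hp
    by_contra h
    exact hp (hfin.mem_toFinset.mpr h)
  set Q' : ℕ × ℕ → ℚ := fun ab =>
    ∑ᶠ p ∈ {p : ℕ × ℕ × ℕ | p.1 + p.2.1 = ab.1 ∧ p.2.2 = ab.2}, q p with hQ'
  have hQ'sum : ∀ ab, Q' ab = ∑ p ∈ S.filter (fun p => φ p = ab), q p := by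
    intro ab
    apply finsum_mem_eq_sum_of_inter_support_eq
    ext p
    simp only [Set.mem_inter_iff, Set.mem_setOf_eq, Finset.coe_filter,
      Function.mem_support, hSdef, hfin.mem_toFinset, hφ, Prod.ext_iff]
    tauto
  refine ⟨q₁ + q₂, Q', rfl, fun ab => rfl, ?_⟩
  set L : ℕ × ℕ → ℝ := fun ab => Real.logb 2 ((ab.1 * n + ab.2 : ℕ) : ℝ) with hL
  have hLp : ∀ p : ℕ × ℕ × ℕ,
      Real.logb 2 ((p.1 * n + p.2.1 * n + p.2.2 : ℕ) : ℝ) = L (φ p) := by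
    intro p
    have : p.1 * n + p.2.1 * n + p.2.2 = (p.1 + p.2.1) * n + p.2.2 := by ring
    simp [hL, hφ, this]
  have hLHS : ∑ᶠ p : ℕ × ℕ × ℕ,
      (q p : ℝ) * Real.logb 2 ((p.1 * n + p.2.1 * n + p.2.2 : ℕ) : ℝ)
      = ∑ p ∈ S, (q p : ℝ) * L (φ p) := by
    rw [finsum_eq_sum_of_support_subset (s := S)]
    · exact Finset.sum_congr rfl fun p _ => by rw [hLp]
    · intro p hp
      have : q p ≠ 0 := by
        intro h; apply hp; simp [h]
      exact hfin.mem_toFinset.mpr this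
  have hRHS : ∑ᶠ ab : ℕ × ℕ, (Q' ab : ℝ) * L ab
      = ∑ ab ∈ S.image φ, (Q' ab : ℝ) * L ab := by
    apply finsum_eq_sum_of_support_subset
    intro ab hab
    have : Q' ab ≠ 0 := by
      intro h; apply hab; simp [h]
    rw [hQ'sum ab] at this
    obtain ⟨p, hp, -⟩ := Finset.exists_ne_zero_of_sum_ne_zero this
    rw [Finset.mem_filter] at hp
    exact Finset.mem_image.mpr ⟨p, hp.1, hp.2⟩
  rw [hLHS, hRHS]
  have key : ∑ ab ∈ S.image φ, (Q' ab : ℝ) * L ab = ∑ p ∈ S, (q p : ℝ) * L (φ p) := by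
    rw [← Finset.sum_fiberwise_of_maps_to (g := φ) (fun p hp => Finset.mem_image_of_mem φ hp)
      (fun p => (q p : ℝ) * L (φ p))]
    refine Finset.sum_congr rfl fun ab _ => ?_
    rw [hQ'sum ab, Rat.cast_sum, Finset.sum_mul]
    refine Finset.sum_congr rfl fun p hp => ?_
    rw [Finset.mem_filter] at hp
    rw [hp.2]
  rw [key, Rat.cast_add]
  ring
end
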